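/- Let Θ₁, Θ₂ be symmetric positive definite p×p matrices with Γ = Θ₂ − Θ₁, and suppose Θ₁ + vΓ is positive definite for all v ∈ [0,1]. Then ln det(Θ₁) − ln det(Θ₂) = A − tr(Γ Σ₁), where Σ₁ = Θ₁⁻¹ and A = vec(Γ)ᵀ (∫₀¹ (1−v) (Θ₁+vΓ)⁻¹ ⊗ (Θ₁+vΓ)⁻¹ dv) vec(Γ). -/

import Mathlib

open Matrix Kronecker

/-- The scalar quadratic form `A` from the integral-remainder Taylor expansion
of `log det`: `vec(Γ)ᵀ (∫₀¹ (1−v)(Θ₁+vΓ)⁻¹ ⊗ (Θ₁+vΓ)⁻¹ dv) vec(Γ)`,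
written with the integral pulled to the scalar level. -/
noncomputable def kronQuadForm {p : ℕ} (Θ₁ Γ : Matrix (Fin p) (Fin p) ℝ) : ℝ :=
  ∫ v in (0:ℝ)..1, (1 - v) *
    ((fun ij : Fin p × Fin p => Γ ij.1 ij.2) ⬝ᵥ
      (((Θ₁ + v • Γ)⁻¹ ⊗ₖ (Θ₁ + v • Γ)⁻¹).mulVec
        fun ij : Fin p × Fin p => Γ ij.1 ij.2))

namespace Stmt10Aux

/-- Determinant as a continuous multilinear map in the rows. -/
noncomputable def detCM (p : ℕ) :
    ContinuousMultilinearMap ℝ (fun _ : Fin p => (Fin p → ℝ)) ℝ :=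
  { (Matrix.detRowAlternating : (Fin p → ℝ) [⋀^Fin p]→ₗ[ℝ] ℝ).toMultilinearMap with
    cont := by
      show Continuous fun v : Fin p → Fin p → ℝ => Matrix.det (Matrix.of v)
      exact Continuous.matrix_det (by continuity) }

/-- Jacobi's formula along a line: derivative of `t ↦ det (M + t • Γ)`. -/
theorem hasDerivAt_det {p : ℕ} (M Γ : Matrix (Fin p) (Fin p) ℝ) (v : ℝ) :
    HasDerivAt (fun t : ℝ => (M + t • Γ).det)
      ((Matrix.adjugate (M + v • Γ) * Γ).trace) v := by
  have hrows : HasDerivAt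
      (fun t : ℝ => ((fun i => M i) + t • (fun i => Γ i) : Fin p → Fin p → ℝ))
      (fun i => Γ i) v := by
    simpa using
      ((hasDerivAt_id v).smul_const (fun i => Γ i : Fin p → Fin p → ℝ)).const_add
        (fun i => M i : Fin p → Fin p → ℝ)
  have h := (ContinuousMultilinearMap.hasFDerivAt (detCM p) _).comp_hasDerivAt v hrows
  have h2 : HasDerivAt (fun t : ℝ => (M + t • Γ).det)
      (((detCM p).linearDeriv ((fun i => M i) + v • fun i => Γ i)) fun i => Γ i) v := h
  convert h2 using 1
  rw [ContinuousMultilinearMap.linearDeriv_apply]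
  have hterm : ∀ i, (detCM p)
      (Function.update ((fun i => M i) + v • (fun i => Γ i) : Fin p → Fin p → ℝ) i (Γ i))
      = ((M + v • Γ).updateRow i (Γ i)).det := fun i => rfl
  rw [Finset.sum_congr rfl fun i _ => hterm i]
  set X := M + v • Γ
  have h1 : ∀ i, (X.updateRow i (Γ i)).det = ∑ j, X.adjugate j i * Γ i j := by
    intro i
    rw [← Matrix.cramer_transpose_apply, Matrix.cramer_eq_adjugate_mulVec,
      ← Matrix.adjugate_transpose]
    simp [Matrix.mulVec, dotProduct]
  simp_rw [Matrix.trace, Matrix.diag, Matrix.mul_apply, h1]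
  exact (Finset.sum_comm).symm

attribute [local instance] Matrix.linftyOpNormedRing Matrix.linftyOpNormedAlgebra

/-- Derivative of `t ↦ (M + t • Γ)⁻¹` (as `Ring.inverse`) along a line. -/
theorem hasDerivAt_ringInverse {p : ℕ} (M Γ : Matrix (Fin p) (Fin p) ℝ) (v : ℝ)
    (hX : IsUnit (M + v • Γ)) :
    HasDerivAt (fun t : ℝ => Ring.inverse (M + t • Γ))
      (-(Ring.inverse (M + v • Γ) * Γ * Ring.inverse (M + v • Γ))) v := by
  have hline : HasDerivAt (fun t : ℝ => M + t • Γ) Γ v := by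
    have h0 := ((hasDerivAt_id' v).smul_const Γ).const_add M
    rw [one_smul] at h0
    exact h0
  have hu : (hX.unit : Matrix (Fin p) (Fin p) ℝ) = M + v • Γ := hX.unit_spec
  have hinv := hasFDerivAt_ringInverse (𝕜 := ℝ) hX.unit
  rw [hu] at hinv
  have h := hinv.comp_hasDerivAt v hline
  convert h using 1
  case e'_9 =>
    simp [Ring.inverse_unit, hu, ContinuousLinearMap.mulLeftRight_apply,
      ← Matrix.nonsing_inv_eq_ringInverse]
  all_goals rfl

/-- `A ↦ (Γ * A).trace` as a continuous linear map. -/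
noncomputable def traceMulLeft {p : ℕ} (Γ : Matrix (Fin p) (Fin p) ℝ) :
    Matrix (Fin p) (Fin p) ℝ →L[ℝ] ℝ :=
  LinearMap.toContinuousLinearMap
    ((Matrix.traceLinearMap (Fin p) ℝ ℝ).comp (LinearMap.mulLeft ℝ Γ))

@[simp] theorem traceMulLeft_apply {p : ℕ} (Γ A : Matrix (Fin p) (Fin p) ℝ) :
    traceMulLeft Γ A = (Γ * A).trace := rfl

theorem kron_dot {p : ℕ} (Γ N : Matrix (Fin p) (Fin p) ℝ) (hΓ : Γᵀ = Γ) (hN : Nᵀ = N) :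
    (fun ij : Fin p × Fin p => Γ ij.1 ij.2) ⬝ᵥ
      ((N ⊗ₖ N).mulVec fun ij : Fin p × Fin p => Γ ij.1 ij.2)
      = (Γ * N * Γ * N).trace := by
  have hΓ' : ∀ i j, Γ i j = Γ j i := fun i j => by
    conv_lhs => rw [← hΓ, Matrix.transpose_apply]
  have hN' : ∀ i j, N i j = N j i := fun i j => by
    conv_lhs => rw [← hN, Matrix.transpose_apply]
  simp only [dotProduct, Matrix.mulVec, Matrix.trace, Matrix.diag,
    Matrix.mul_apply, kroneckerMap_apply, Fintype.sum_prod_type,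
    Finset.sum_mul, Finset.mul_sum]
  refine Finset.sum_congr rfl fun i _ => ?_
  rw [Finset.sum_comm]
  refine Finset.sum_congr rfl fun k _ => ?_
  rw [Finset.sum_comm]
  refine Finset.sum_congr rfl fun l _ => ?_
  refine Finset.sum_congr rfl fun j _ => ?_
  rw [hN' i k, hΓ' k l]
  ring

end Stmt10Aux

open Stmt10Aux in
/-- Exact second-order Taylor expansion of the log-determinant:
`ln det Θ₁ − ln det Θ₂ = A − tr(Γ Σ₁)` with `Γ = Θ₂ − Θ₁`, `Σ₁ = Θ₁⁻¹`. -/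
theorem stmt10 {p : ℕ} (Θ₁ Θ₂ : Matrix (Fin p) (Fin p) ℝ)
    (h₁ : Θ₁.PosDef) (h₂ : Θ₂.PosDef)
    (hline : ∀ v : ℝ, v ∈ Set.Icc (0:ℝ) 1 → (Θ₁ + v • (Θ₂ - Θ₁)).PosDef) :
    Real.log Θ₁.det - Real.log Θ₂.det =
      kronQuadForm Θ₁ (Θ₂ - Θ₁) - ((Θ₂ - Θ₁) * Θ₁⁻¹).trace := by
  classical
  letI : NormedRing (Matrix (Fin p) (Fin p) ℝ) := Matrix.linftyOpNormedRing
  letI : NormedAlgebra ℝ (Matrix (Fin p) (Fin p) ℝ) := Matrix.linftyOpNormedAlgebra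
  set Γ : Matrix (Fin p) (Fin p) ℝ := Θ₂ - Θ₁ with hΓdef
  have hΓsym : Γᵀ = Γ := by
    rw [hΓdef, Matrix.transpose_sub]
    rw [← Matrix.conjTranspose_eq_transpose_of_trivial, ← Matrix.conjTranspose_eq_transpose_of_trivial,
      h₁.1, h₂.1]
  set q : ℝ → ℝ := fun t =>
    (Γ * Ring.inverse (Θ₁ + t • Γ) * Γ * Ring.inverse (Θ₁ + t • Γ)).trace with hqdef
  set G : ℝ → ℝ := fun t =>
    (1 - t) * (Γ * Ring.inverse (Θ₁ + t • Γ)).trace + Real.log ((Θ₁ + t • Γ).det) with hGdef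
  -- derivative of G on [0,1]
  have hG' : ∀ t ∈ Set.Icc (0:ℝ) 1, HasDerivAt G (-((1 - t) * q t)) t := by
    intro t ht
    have hpd := hline t ht
    have hXu : IsUnit (Θ₁ + t • Γ) := hpd.isUnit
    have hdetpos : 0 < (Θ₁ + t • Γ).det := hpd.det_pos
    have hdet := hasDerivAt_det Θ₁ Γ t
    have hlog := (Real.hasDerivAt_log hdetpos.ne').comp t hdet
    have hlogval : ((Θ₁ + t • Γ).det)⁻¹ * ((Θ₁ + t • Γ).adjugate * Γ).trace
        = (Γ * Ring.inverse (Θ₁ + t • Γ)).trace := by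
      rw [← Matrix.nonsing_inv_eq_ringInverse, Matrix.trace_mul_comm, Matrix.inv_def]
      simp [Matrix.smul_mul, Matrix.trace_smul, Ring.inverse_eq_inv', smul_eq_mul]
    rw [hlogval] at hlog
    have hinv := hasDerivAt_ringInverse Θ₁ Γ t hXu
    have hq := ((traceMulLeft Γ).hasFDerivAt).comp_hasDerivAt t hinv
    have h1t : HasDerivAt (fun s : ℝ => 1 - s) (-1) t := (hasDerivAt_id t).const_sub 1
    have htot := (h1t.mul hq).add hlog
    convert htot using 1
    case e'_9 =>
      simp only [hqdef, Function.comp_apply, map_neg, traceMulLeft_apply, Matrix.mul_assoc]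
      erw [map_neg, traceMulLeft_apply]
      ring
    all_goals rfl
  -- continuity of the derivative on [0,1]
  have hMinv : ContinuousOn (fun t : ℝ => Ring.inverse (Θ₁ + t • Γ)) (Set.Icc (0:ℝ) 1) := by
    intro t ht
    exact ((hasDerivAt_ringInverse Θ₁ Γ t (hline t ht).isUnit).continuousAt).continuousWithinAt
  have hqc : ContinuousOn q (Set.Icc (0:ℝ) 1) := by
    have hc : ContinuousOn (fun t : ℝ =>
        Ring.inverse (Θ₁ + t • Γ) * Γ * Ring.inverse (Θ₁ + t • Γ)) (Set.Icc (0:ℝ) 1) :=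
      (hMinv.mul continuousOn_const).mul hMinv
    have h2 := (traceMulLeft Γ).continuous.comp_continuousOn hc
    simpa [hqdef, Function.comp_def, traceMulLeft_apply, Matrix.mul_assoc] using h2
  have hcont : ContinuousOn (fun t : ℝ => -((1 - t) * q t)) (Set.Icc (0:ℝ) 1) :=
    (((continuousOn_const.sub continuousOn_id).mul hqc)).neg
  have hInt : IntervalIntegrable (fun t : ℝ => -((1 - t) * q t)) MeasureTheory.volume 0 1 := by
    apply ContinuousOn.intervalIntegrable
    rwa [Set.uIcc_of_le zero_le_one]
  have hFTC := intervalIntegral.integral_eq_sub_of_hasDerivAt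
    (f := G) (f' := fun t => -((1 - t) * q t))
    (fun t ht => hG' t (by rwa [Set.uIcc_of_le zero_le_one] at ht)) hInt
  -- identify kronQuadForm with the integral of (1-t) * q t
  have hkron : kronQuadForm Θ₁ Γ = ∫ t in (0:ℝ)..1, (1 - t) * q t := by
    unfold kronQuadForm
    apply intervalIntegral.integral_congr
    intro t ht
    rw [Set.uIcc_of_le zero_le_one] at ht
    have hpd := hline t ht
    have hNsym : ((Θ₁ + t • Γ)⁻¹)ᵀ = (Θ₁ + t • Γ)⁻¹ := by
      rw [← Matrix.conjTranspose_eq_transpose_of_trivial]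
      exact hpd.inv.1
    simp only [hqdef]
    rw [kron_dot Γ _ hΓsym hNsym, Matrix.nonsing_inv_eq_ringInverse]
  have hG1 : G 1 = Real.log Θ₂.det := by
    rw [hGdef]
    simp [hΓdef]
  have hG0 : G 0 = (Γ * Θ₁⁻¹).trace + Real.log Θ₁.det := by
    rw [hGdef]
    simp [← Matrix.nonsing_inv_eq_ringInverse]
  rw [intervalIntegral.integral_neg] at hFTC
  have hk2 : kronQuadForm Θ₁ Γ = G 0 - G 1 := by
    rw [hkron]; linarith
  rw [hk2, hG0, hG1]
  ring
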